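/- Let h be a real symmetric 2×2 matrix with trace H = tr(h), and suppose that H ≥ 0 and that h − ε·H·I is positive semidefinite for some ε > 0. Then H·tr(h³) − (tr(h²))² ≥ 2·ε²·H²·( tr(h²) − ½·H² ). -/

import Mathlib

/-- Pointwise pinching inequality Z = H·tr(h³) − (tr h²)² ≥ 2ε²H²(tr h² − ½H²)
for a symmetric 2×2 matrix with h ≥ εH·I. -/
theorem stmt_6 (h : Matrix (Fin 2) (Fin 2) ℝ) (hs : h.IsSymm)
    (ε : ℝ) (hε : 0 < ε) (H : ℝ) (hH : H = Matrix.trace h) (hH0 : 0 ≤ H)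
    (hpinch : (h - (ε * H) • (1 : Matrix (Fin 2) (Fin 2) ℝ)).PosSemidef) :
    2 * ε ^ 2 * H ^ 2 * (Matrix.trace (h ^ 2) - H ^ 2 / 2) ≤
      H * Matrix.trace (h ^ 3) - (Matrix.trace (h ^ 2)) ^ 2 := by
  set a := h 0 0 with ha
  set b := h 0 1 with hb
  set c := h 1 1 with hc
  have hsym : h 1 0 = b := (hs.apply 1 0).symm
  have key : ∀ t : ℝ, 0 ≤ (a - ε * H) * (t * t) + (2 * b) * t + (c - ε * H) := by
    intro t
    have := hpinch.dotProduct_mulVec_nonneg ![t, 1]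
    simp only [dotProduct, Matrix.mulVec, Fin.sum_univ_two, Matrix.sub_apply,
      Matrix.smul_apply, Matrix.one_apply, star_trivial, Pi.star_apply,
      Matrix.cons_val_zero, Matrix.cons_val_one, Matrix.head_cons,
      smul_eq_mul] at this
    simp only [hsym, if_true, Fin.isValue, one_ne_zero, zero_ne_one, if_false,
      mul_zero, mul_one, sub_zero] at this
    nlinarith [this]
  have hdisc : discrim (a - ε * H) (2 * b) (c - ε * H) ≤ 0 :=
    discrim_le_zero key
  rw [discrim] at hdisc
  have hp : 0 ≤ a - ε * H := by
    have := hpinch.dotProduct_mulVec_nonneg ![1, 0]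
    simp only [dotProduct, Matrix.mulVec, Fin.sum_univ_two, Matrix.sub_apply,
      Matrix.smul_apply, Matrix.one_apply, star_trivial, Pi.star_apply,
      Matrix.cons_val_zero, Matrix.cons_val_one, Matrix.head_cons,
      smul_eq_mul] at this
    simp only [hsym, if_true, Fin.isValue, one_ne_zero, zero_ne_one, if_false,
      mul_zero, mul_one, sub_zero] at this
    nlinarith [this]
  have hq : 0 ≤ c - ε * H := by
    have := hpinch.dotProduct_mulVec_nonneg ![0, 1]
    simp only [dotProduct, Matrix.mulVec, Fin.sum_univ_two, Matrix.sub_apply,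
      Matrix.smul_apply, Matrix.one_apply, star_trivial, Pi.star_apply,
      Matrix.cons_val_zero, Matrix.cons_val_one, Matrix.head_cons,
      smul_eq_mul] at this
    simp only [hsym, if_true, Fin.isValue, one_ne_zero, zero_ne_one, if_false,
      mul_zero, mul_one, sub_zero] at this
    nlinarith [this]
  have htr : H = a + c := by rw [hH, Matrix.trace_fin_two]
  have h2 : Matrix.trace (h ^ 2) = a ^ 2 + 2 * b ^ 2 + c ^ 2 := by
    rw [pow_two, Matrix.trace_fin_two, Matrix.mul_apply, Matrix.mul_apply,
      Fin.sum_univ_two, Fin.sum_univ_two, hsym]; ring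
  have h3 : Matrix.trace (h ^ 3) = a ^ 3 + 3 * a * b ^ 2 + 3 * b ^ 2 * c + c ^ 3 := by
    rw [pow_succ, pow_two, Matrix.trace_fin_two]
    simp only [Matrix.mul_apply, Fin.sum_univ_two, hsym]
    ring
  rw [h2, h3]
  -- Z - RHS = (ac - b² - ε²H²)((a-c)² + 4b²), and ac - b² ≥ εH² - ε²H², εH(H - 2εH) ≥ 0
  have hH2 : 0 ≤ H - 2 * ε * H := by linarith
  have t1 : 0 ≤ a * c - b ^ 2 - ε ^ 2 * H ^ 2 := by
    nlinarith [mul_nonneg (mul_nonneg hε.le hH0) hH2]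
  have t2 : (0:ℝ) ≤ (a - c) ^ 2 + 4 * b ^ 2 := by positivity
  have hexp : H * (a ^ 3 + 3 * a * b ^ 2 + 3 * b ^ 2 * c + c ^ 3) -
      (a ^ 2 + 2 * b ^ 2 + c ^ 2) ^ 2 -
      2 * ε ^ 2 * H ^ 2 * (a ^ 2 + 2 * b ^ 2 + c ^ 2 - H ^ 2 / 2) =
      (a * c - b ^ 2 - ε ^ 2 * H ^ 2) * ((a - c) ^ 2 + 4 * b ^ 2) := by
    rw [htr]; ring
  nlinarith [mul_nonneg t1 t2, hexp]
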